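/- Let I be a nonempty finite index set, and let c_i ≥ 0 and d_i ∈ ℝ for i ∈ I with C := Σ_i c_i > 0 and S := Σ_i c_i·d_i² > 0. Then the function F : (0, ∞) → ℝ given by F(h) = Σ_i c_i·(−ln h − d_i²/(2h²)) = −C·ln h − S/(2h²) attains a strict global maximum at h* = √(S/C); i.e., F(h) ≤ F(h*) for all h > 0, with equality if and only if h = h*. This establishes that the next-step bandwidth update ĥ² = (Σ_{t,n≠t} γ_{qt}·ρ^num_{qnt}·(y_t − y_n)²)/(Σ_{t,n≠t} γ_{qt}·ρ^num_{qnt}) is the exact maximizer of the corresponding terms of the EM auxiliary function for a Gaussian kernel. -/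

import Mathlib

open Finset in
/-- The function `F(h) = ∑ i, c i * (−ln h − d i²/(2h²)) = −C ln h − S/(2h²)` attains a
strict global maximum over `h > 0` at `h* = √(S/C)`.  This shows the next-step bandwidth
update of the Gaussian-kernel KDE-HMM exactly maximizes the corresponding terms of the EM
auxiliary function. -/
theorem bandwidth_update_maximizes_auxiliary
    (I : Type*) [Fintype I] [Nonempty I] (c d : I → ℝ)
    (hc : ∀ i, 0 ≤ c i) (hC : 0 < ∑ i, c i) (hS : 0 < ∑ i, c i * d i ^ 2) :
    let C : ℝ := ∑ i, c i
    let S : ℝ := ∑ i, c i * d i ^ 2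
    let F : ℝ → ℝ := fun h => ∑ i, c i * (-Real.log h - d i ^ 2 / (2 * h ^ 2))
    let hstar : ℝ := Real.sqrt (S / C)
    ∀ h : ℝ, 0 < h → F h ≤ F hstar ∧ (F h = F hstar ↔ h = hstar) := by
  intro C S F hstar h hh
  have hdiv : (0:ℝ) < S / C := div_pos hS hC
  have hst : 0 < hstar := Real.sqrt_pos.mpr hdiv
  have hst2 : hstar ^ 2 = S / C := Real.sq_sqrt hdiv.le
  have hSC : S = C * hstar ^ 2 := by
    rw [hst2]; field_simp
    rw [mul_div_assoc, div_self (ne_of_gt hC : C ≠ 0), mul_one]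
  have hF : ∀ u : ℝ, F u = -C * Real.log u - S * (1 / (2 * u ^ 2)) := by
    intro u
    have : ∀ i : I, c i * (-Real.log u - d i ^ 2 / (2 * u ^ 2))
        = c i * (-Real.log u) - (c i * d i ^ 2) * (1 / (2 * u ^ 2)) := by
      intro i; ring
    simp only [F, this, Finset.sum_sub_distrib, ← Finset.sum_mul]
    ring
  set x : ℝ := hstar ^ 2 / h ^ 2 with hxdef
  have hx : 0 < x := div_pos (pow_pos hst 2) (pow_pos hh 2)
  have hlogx : Real.log x = 2 * Real.log hstar - 2 * Real.log h := by
    rw [hxdef, Real.log_div (by positivity) (by positivity),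
      Real.log_pow, Real.log_pow]
    push_cast; ring
  have hdiff : F hstar - F h = (C / 2) * (x - 1 - Real.log x) := by
    rw [hF, hF, hlogx, hSC, hxdef]
    field_simp
    ring
  have hxeq : x = 1 ↔ h = hstar := by
    constructor
    · intro hx1
      rw [hxdef, div_eq_one_iff_eq (by positivity)] at hx1
      have hz : (h - hstar) * (h + hstar) = 0 := by nlinarith
      rcases mul_eq_zero.mp hz with h0 | h0
      · linarith
      · linarith
    · intro h1; rw [hxdef, h1]; field_simp
  constructor
  · have := Real.log_le_sub_one_of_pos hx
    nlinarith
  · constructor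
    · intro hFe
      by_contra hne
      have hxne : x ≠ 1 := fun hx1 => hne (hxeq.mp hx1)
      have := Real.log_lt_sub_one_of_pos hx hxne
      nlinarith
    · intro h1; rw [h1]
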